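/- Let ⟨f_i : i < ω⟩ be functions ℕ → ℕ with f_{i+1} <* f_i, let g : ℕ → ℕ, and let ⟨k_i : i < ω⟩ be a strictly increasing sequence such that for every i: f_0(k_i) > f_1(k_i) > … > f_i(k_i) > g(k_i). Let K = {k_i : i < ω}. Suppose ⟨n_i : i < ω⟩ is a strictly increasing sequence with n_0 = 0 such that (i) for infinitely many i, |(n_i, n_{i+1}) ∩ K| > 2^{n_i}, and (ii) for every i and every n ≥ n_{i+1}, f_{i+1}(n) < f_i(n). Define h : ℕ → ℕ by h(n) = f_i(n) for n ∈ [n_i, n_{i+1}). Then there are infinitely many k with g(k) < h(k); in particular h <* g fails. -/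

import Mathlib

theorem stmt_11 (f : ℕ → ℕ → ℕ)
    (hf : ∀ i, ∀ᶠ n in Filter.atTop, f (i + 1) n < f i n)
    (g : ℕ → ℕ) (k : ℕ → ℕ) (hk : StrictMono k)
    (hchain : ∀ i, (∀ j < i, f (j + 1) (k i) < f j (k i)) ∧ g (k i) < f i (k i))
    (n : ℕ → ℕ) (hn : StrictMono n) (hn0 : n 0 = 0)
    (hbig : ∀ N, ∃ i ≥ N,
      2 ^ (n i) < Set.ncard {x | n i < x ∧ x < n (i + 1) ∧ ∃ j, k j = x})
    (hdec : ∀ i, ∀ m, n (i + 1) ≤ m → f (i + 1) m < f i m)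
    (h : ℕ → ℕ) (hh : ∀ i m, n i ≤ m → m < n (i + 1) → h m = f i m) :
    ∀ N, ∃ m ≥ N, g m < h m := by
  intro N
  obtain ⟨i, hiN, hcard⟩ := hbig N
  set J : Set ℕ := {j | n i < k j ∧ k j < n (i + 1)} with hJ
  have hSim : {x | n i < x ∧ x < n (i + 1) ∧ ∃ j, k j = x} = k '' J := by
    ext x
    constructor
    · rintro ⟨h1, h2, j, rfl⟩; exact ⟨j, ⟨h1, h2⟩, rfl⟩
    · rintro ⟨j, ⟨h1, h2⟩, rfl⟩; exact ⟨h1, h2, j, rfl⟩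
  have hcardJ : 2 ^ (n i) < J.ncard := by
    rwa [hSim, Set.ncard_image_of_injective _ hk.injective] at hcard
  have hnot : ¬ J ⊆ Set.Iio i := by
    intro hsub
    have h1 : J.ncard ≤ (Set.Iio i).ncard :=
      Set.ncard_le_ncard hsub (Set.finite_Iio i)
    have h2 : (Set.Iio i).ncard = i := by
      rw [← Finset.coe_Iio, Set.ncard_coe_finset, Nat.card_Iio]
    have h3 : i ≤ 2 ^ (n i) :=
      le_trans hn.le_apply (Nat.lt_two_pow_self (n := n i)).le
    omega
  obtain ⟨ℓ, hℓJ, hℓi⟩ := Set.not_subset.mp hnot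
  simp only [Set.mem_Iio, not_lt] at hℓi
  obtain ⟨hlt1, hlt2⟩ := hℓJ
  refine ⟨k ℓ, ?_, ?_⟩
  · have : N ≤ n i := le_trans hiN hn.le_apply
    omega
  · have hmono : ∀ b, i ≤ b → b ≤ ℓ → f b (k ℓ) ≤ f i (k ℓ) := by
      intro b hib
      induction b, hib using Nat.le_induction with
      | base => intro _; exact le_rfl
      | succ b hib IH =>
        intro hb
        exact le_trans ((hchain ℓ).1 b (by omega)).le (IH (by omega))
    have hg : g (k ℓ) < f ℓ (k ℓ) := (hchain ℓ).2
    have heq : h (k ℓ) = f i (k ℓ) := hh i (k ℓ) hlt1.le hlt2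
    rw [heq]
    exact lt_of_lt_of_le hg (hmono ℓ hℓi le_rfl)
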